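/- The submanifold field representation map is injective on SGRFs: if two single-Gaussian radiance fields with nonzero color satisfy ρ₁ = ρ₂ and c₁ = c₂, then their representations (M₁, F₁) and (M₂, F₂) are equal, and conversely if (M₁, F₁) = (M₂, F₂) with Fᵢ(x) = cᵢ((x-μᵢ)/‖x-μᵢ‖) on the common ellipsoid Mᵢ = {x : (x-μᵢ)ᵀΣᵢ⁻¹(x-μᵢ) = 1}, then ρ₁ = ρ₂ and c₁ = c₂ on the set of directions realized by M₁. -/

import Mathlib

open Matrix

/-- Mahalanobis quadratic form. -/
noncomputable def mahal (μ : Fin 3 → ℝ) (S : Matrix (Fin 3) (Fin 3) ℝ) (x : Fin 3 → ℝ) : ℝ :=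
  (x - μ) ⬝ᵥ (S⁻¹ *ᵥ (x - μ))

/-- Unnormalized Gaussian density. -/
noncomputable def gdens (μ : Fin 3 → ℝ) (S : Matrix (Fin 3) (Fin 3) ℝ)
    (x : Fin 3 → ℝ) : ℝ :=
  Real.exp (-(mahal μ S x) / 2)

/-- The iso-probability submanifold at level `1`. -/
noncomputable def isoSurf (μ : Fin 3 → ℝ) (S : Matrix (Fin 3) (Fin 3) ℝ) : Set (Fin 3 → ℝ) :=
  {x | mahal μ S x = 1}

/-- Euclidean normalization of `x - μ`. -/
noncomputable def dirFrom (μ x : Fin 3 → ℝ) : Fin 3 → ℝ :=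
  (Real.sqrt ((x - μ) ⬝ᵥ (x - μ)))⁻¹ • (x - μ)

/-- The submanifold field `F(x) = c((x-μ)/‖x-μ‖)`. -/
noncomputable def sfField (c : (Fin 3 → ℝ) → (Fin 3 → ℝ)) (μ x : Fin 3 → ℝ) :
    Fin 3 → ℝ :=
  c (dirFrom μ x)

lemma quad_pos {A : Matrix (Fin 3) (Fin 3) ℝ} (hA : A.PosDef)
    {v : Fin 3 → ℝ} (hv : v ≠ 0) : 0 < v ⬝ᵥ (A *ᵥ v) := by
  simpa using hA.dotProduct_mulVec_pos hv

lemma quad_zero {A : Matrix (Fin 3) (Fin 3) ℝ} (hA : A.PosDef)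
    {v : Fin 3 → ℝ} (h : v ⬝ᵥ (A *ᵥ v) = 0) : v = 0 := by
  by_contra hv
  exact (quad_pos hA hv).ne' h

lemma symm_dot {A : Matrix (Fin 3) (Fin 3) ℝ} (hA : A.IsHermitian)
    (x y : Fin 3 → ℝ) : x ⬝ᵥ (A *ᵥ y) = y ⬝ᵥ (A *ᵥ x) := by
  have : Aᵀ = A := by simpa [Matrix.IsHermitian] using hA
  rw [dotProduct_mulVec, ← mulVec_transpose, this, dotProduct_comm]

lemma expand_quad (A : Matrix (Fin 3) (Fin 3) ℝ) (c d : Fin 3 → ℝ) (s : ℝ) :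
    (c + s • d) ⬝ᵥ (A *ᵥ (c + s • d)) =
      c ⬝ᵥ (A *ᵥ c) + s^2 * (d ⬝ᵥ (A *ᵥ d)) + s * (c ⬝ᵥ (A *ᵥ d)) + s * (d ⬝ᵥ (A *ᵥ c)) := by
  simp [mulVec_add, mulVec_smul, dotProduct_add, add_dotProduct, dotProduct_smul,
    smul_dotProduct, smul_eq_mul]
  ring

lemma herm_ext {B : Matrix (Fin 3) (Fin 3) ℝ} (hB : Bᵀ = B)
    (h : ∀ v : Fin 3 → ℝ, v ⬝ᵥ (B *ᵥ v) = 0) : B = 0 := by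
  ext i j
  have hsym : B j i = B i j := by
    conv_lhs => rw [← hB]
    rfl
  have hii := h (Pi.single i 1)
  have hjj := h (Pi.single j 1)
  have hij := h (Pi.single i 1 + Pi.single j 1)
  simp [mulVec_add, dotProduct_add, add_dotProduct, mulVec_single, single_dotProduct] at hii hjj hij
  simp only [Matrix.zero_apply]
  linarith [hij, hii, hjj, hsym]


lemma smul_quad (A : Matrix (Fin 3) (Fin 3) ℝ) (d : Fin 3 → ℝ) (s : ℝ) :
    (s • d) ⬝ᵥ (A *ᵥ (s • d)) = s^2 * (d ⬝ᵥ (A *ᵥ d)) := by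
  simp [mulVec_smul, dotProduct_smul, smul_dotProduct, smul_eq_mul]
  ring


lemma ellipsoid_eq {μ₁ μ₂ : Fin 3 → ℝ} {A₁ A₂ : Matrix (Fin 3) (Fin 3) ℝ}
    (hA₁ : A₁.PosDef) (hA₂ : A₂.PosDef)
    (h : ∀ x : Fin 3 → ℝ, (x - μ₁) ⬝ᵥ (A₁ *ᵥ (x - μ₁)) = 1 ↔
        (x - μ₂) ⬝ᵥ (A₂ *ᵥ (x - μ₂)) = 1) :
    μ₁ = μ₂ ∧ A₁ = A₂ := by
  set c : Fin 3 → ℝ := μ₁ - μ₂ with hc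
  have key : ∀ (d : Fin 3 → ℝ) (s : ℝ), s^2 * (d ⬝ᵥ (A₁ *ᵥ d)) = 1 →
      c ⬝ᵥ (A₂ *ᵥ c) + s^2 * (d ⬝ᵥ (A₂ *ᵥ d)) + 2 * s * (d ⬝ᵥ (A₂ *ᵥ c)) = 1 := by
    intro d s hs
    have h1 : ((μ₁ + s • d) - μ₁) ⬝ᵥ (A₁ *ᵥ ((μ₁ + s • d) - μ₁)) = 1 := by
      have he : (μ₁ + s • d) - μ₁ = s • d := by abel
      rw [he, smul_quad]; exact hs
    have h2 := (h _).mp h1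
    have he : (μ₁ + s • d) - μ₂ = c + s • d := by rw [hc]; abel
    rw [he, expand_quad, symm_dot hA₂.1 c d] at h2
    linear_combination h2
  have tfact : ∀ d : Fin 3 → ℝ, d ≠ 0 →
      ∃ s : ℝ, s ≠ 0 ∧ s^2 * (d ⬝ᵥ (A₁ *ᵥ d)) = 1 := by
    intro d hd
    have hq : 0 < d ⬝ᵥ (A₁ *ᵥ d) := quad_pos hA₁ hd
    refine ⟨(Real.sqrt (d ⬝ᵥ (A₁ *ᵥ d)))⁻¹, by positivity, ?_⟩
    rw [inv_pow, Real.sq_sqrt hq.le, inv_mul_cancel₀ hq.ne']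
  have hdc : ∀ d : Fin 3 → ℝ, d ≠ 0 → d ⬝ᵥ (A₂ *ᵥ c) = 0 := by
    intro d hd
    obtain ⟨s, hs0, hs⟩ := tfact d hd
    have k1 := key d s hs
    have k2 := key d (-s) (by rw [neg_sq]; exact hs)
    have h4s : 4 * s * (d ⬝ᵥ (A₂ *ᵥ c)) = 0 := by
      rw [neg_sq] at k2
      linear_combination k1 - k2
    have h4 : (4 : ℝ) * s ≠ 0 := by
      intro habs; exact hs0 (by linarith [mul_eq_zero.mp habs |>.elim (by norm_num) id])
    exact (mul_eq_zero.mp h4s).resolve_left h4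
  have hc0 : c = 0 := by
    by_cases hcz : c = 0
    · exact hcz
    · exact quad_zero hA₂ (hdc c hcz)
  have hmu : μ₁ = μ₂ := by rwa [hc, sub_eq_zero] at hc0
  refine ⟨hmu, ?_⟩
  have hq : ∀ d : Fin 3 → ℝ, d ⬝ᵥ ((A₁ - A₂) *ᵥ d) = 0 := by
    intro d
    by_cases hd : d = 0
    · simp [hd]
    · obtain ⟨s, hs0, hs⟩ := tfact d hd
      have k1 := key d s hs
      rw [hc0] at k1
      simp only [zero_dotProduct, mulVec_zero, dotProduct_zero, zero_add, mul_zero,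
        add_zero] at k1
      have hs2 : (s^2 : ℝ) ≠ 0 := pow_ne_zero 2 hs0
      have heq : d ⬝ᵥ (A₁ *ᵥ d) = d ⬝ᵥ (A₂ *ᵥ d) :=
        mul_left_cancel₀ hs2 (hs.trans k1.symm)
      rw [Matrix.sub_mulVec, dotProduct_sub, heq, sub_self]
  have hB : (A₁ - A₂)ᵀ = A₁ - A₂ := by
    have e1 : A₁ᵀ = A₁ := by simpa [Matrix.IsHermitian] using hA₁.1
    have e2 : A₂ᵀ = A₂ := by simpa [Matrix.IsHermitian] using hA₂.1
    rw [Matrix.transpose_sub, e1, e2]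
  exact sub_eq_zero.mp (herm_ext hB hq)

lemma dot_self_pos {v : Fin 3 → ℝ} (hv : v ≠ 0) : 0 < v ⬝ᵥ v := by
  have := quad_pos (Matrix.PosDef.one (n := Fin 3) (R := ℝ)) hv
  simpa using this

lemma dir_unit {μ x : Fin 3 → ℝ} (hx : x - μ ≠ 0) :
    dirFrom μ x ⬝ᵥ dirFrom μ x = 1 := by
  have hq : 0 < (x - μ) ⬝ᵥ (x - μ) := dot_self_pos hx
  unfold dirFrom
  simp only [dotProduct_smul, smul_dotProduct, smul_eq_mul]
  have h1 : Real.sqrt ((x - μ) ⬝ᵥ (x - μ)) * Real.sqrt ((x - μ) ⬝ᵥ (x - μ))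
      = (x - μ) ⬝ᵥ (x - μ) := Real.mul_self_sqrt hq.le
  have h2 : Real.sqrt ((x - μ) ⬝ᵥ (x - μ)) ≠ 0 := by positivity
  have key : (Real.sqrt ((x - μ) ⬝ᵥ (x - μ)))⁻¹ *
      ((Real.sqrt ((x - μ) ⬝ᵥ (x - μ)))⁻¹ * ((x - μ) ⬝ᵥ (x - μ))) = 1 := by
    rw [← mul_assoc, ← mul_inv, h1, inv_mul_cancel₀ hq.ne']
  linear_combination key


/-- Injectivity of the submanifold-field representation of SGRFs: if `ρ₁ = ρ₂` and
`c₁ = c₂` (on the sphere) then the representations `(M₁,F₁)` and `(M₂,F₂)` agree, and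
conversely if `(M₁,F₁) = (M₂,F₂)` then `ρ₁ = ρ₂` and `c₁ = c₂` on the directions
realized by `M₁`. -/
theorem stmt_9 (μ₁ μ₂ : Fin 3 → ℝ) (S₁ S₂ : Matrix (Fin 3) (Fin 3) ℝ)
    (h₁ : S₁.PosDef) (h₂ : S₂.PosDef)
    (c₁ c₂ : (Fin 3 → ℝ) → (Fin 3 → ℝ))
    (hc₁ : ∃ d : Fin 3 → ℝ, d ⬝ᵥ d = 1 ∧ c₁ d ≠ 0)
    (hc₂ : ∃ d : Fin 3 → ℝ, d ⬝ᵥ d = 1 ∧ c₂ d ≠ 0) :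
    (((∀ x, gdens μ₁ S₁ x = gdens μ₂ S₂ x) ∧
        (∀ d : Fin 3 → ℝ, d ⬝ᵥ d = 1 → c₁ d = c₂ d)) →
      (isoSurf μ₁ S₁ = isoSurf μ₂ S₂ ∧
        ∀ x ∈ isoSurf μ₁ S₁, sfField c₁ μ₁ x = sfField c₂ μ₂ x)) ∧
    (((isoSurf μ₁ S₁ = isoSurf μ₂ S₂) ∧
        (∀ x ∈ isoSurf μ₁ S₁, sfField c₁ μ₁ x = sfField c₂ μ₂ x)) →
      ((∀ x, gdens μ₁ S₁ x = gdens μ₂ S₂ x) ∧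
        ∀ x ∈ isoSurf μ₁ S₁, c₁ (dirFrom μ₁ x) = c₂ (dirFrom μ₁ x))) := by
  constructor
  · rintro ⟨hρ, hcc⟩
    have hm : ∀ x, mahal μ₁ S₁ x = mahal μ₂ S₂ x := by
      intro x
      have := hρ x
      unfold gdens at this
      have := Real.exp_injective this
      linarith
    have hmu : μ₁ = μ₂ := by
      have h0 : mahal μ₂ S₂ μ₁ = 0 := by
        rw [← hm]; unfold mahal; simp
      unfold mahal at h0
      have := quad_zero h₂.inv h0
      rwa [sub_eq_zero] at this
    constructor
    · ext x; simp only [isoSurf, Set.mem_setOf_eq, hm]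
    · intro x hx
      have hxne : x - μ₁ ≠ 0 := by
        intro habs
        have : mahal μ₁ S₁ x = 0 := by unfold mahal; rw [habs]; simp
        rw [hx] at this; norm_num at this
      unfold sfField
      rw [← hmu, hcc _ (dir_unit hxne)]
  · rintro ⟨hM, hF⟩
    have hiff : ∀ x : Fin 3 → ℝ, (x - μ₁) ⬝ᵥ (S₁⁻¹ *ᵥ (x - μ₁)) = 1 ↔
        (x - μ₂) ⬝ᵥ (S₂⁻¹ *ᵥ (x - μ₂)) = 1 := by
      intro x
      have := Set.ext_iff.mp hM x
      simpa [isoSurf, mahal] using this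
    obtain ⟨hmu, hA⟩ := ellipsoid_eq h₁.inv h₂.inv hiff
    constructor
    · intro x; unfold gdens mahal; rw [hmu, hA]
    · intro x hx
      have := hF x hx
      unfold sfField at this
      rwa [← hmu] at this
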